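/- Fix an integer m ≥ 2 and define φ(q; i_1≠1) for q ≥ 1 as the number of sequences (i_1, …, i_q) with each i_k ∈ {1, …, m-1}, with i_1 ≠ 1, and with i_{k+1} ≠ i_k + 1 for all 1 ≤ k ≤ q-1 (and φ(0; i_1≠1) = 1). Then for every integer q > 0, φ(q; i_1≠1) = Σ_{r=1}^{m-2} (-1)^{r-1} (m - 1 - r) φ(q - r), where φ(k) = 0 for k < 0. -/

import Mathlib

/-- `phiNat m n` is the number of sequences `(i₁, …, iₙ)` with entries in `{1, …, m-1}`
(encoded as functions `Fin n → Fin m` with nonzero values) such that no entry is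
immediately followed by its successor. -/
noncomputable def phiNat (m n : ℕ) : ℕ :=
  Nat.card {f : Fin n → Fin m //
    (∀ k, 1 ≤ (f k : ℕ)) ∧
    ∀ (k : ℕ) (hk : k + 1 < n),
      (f ⟨k + 1, hk⟩ : ℕ) ≠ (f ⟨k, Nat.lt_of_succ_lt hk⟩ : ℕ) + 1}

/-- `phi m : ℤ → ℤ`, the rank function of the quadratic dual algebra `N_m(R)^!`,
vanishing on negative integers. -/
noncomputable def phi (m : ℕ) (n : ℤ) : ℤ :=
  if n < 0 then 0 else phiNat m n.toNat

/-- `phiNe1 m q` counts the sequences as in `phiNat m q` which moreover start with an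
entry different from `1` (with `phiNe1 m 0 = 1`). -/
noncomputable def phiNe1 (m q : ℕ) : ℕ :=
  Nat.card {f : Fin q → Fin m //
    (∀ k, 1 ≤ (f k : ℕ)) ∧
    (∀ h : 0 < q, (f ⟨0, h⟩ : ℕ) ≠ 1) ∧
    ∀ (k : ℕ) (hk : k + 1 < q),
      (f ⟨k + 1, hk⟩ : ℕ) ≠ (f ⟨k, Nat.lt_of_succ_lt hk⟩ : ℕ) + 1}

namespace Stmt7

def good (m n : ℕ) (f : Fin n → Fin m) : Prop :=
  (∀ k, 1 ≤ (f k : ℕ)) ∧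
  ∀ (k : ℕ) (hk : k + 1 < n),
    (f ⟨k + 1, hk⟩ : ℕ) ≠ (f ⟨k, Nat.lt_of_succ_lt hk⟩ : ℕ) + 1

noncomputable def Dc (m c q : ℕ) : ℕ :=
  Nat.card {f : Fin q → Fin m // good m q f ∧ ∀ h : 0 < q, (f ⟨0, h⟩ : ℕ) = c}

noncomputable def Ec (m c q : ℕ) : ℕ :=
  Nat.card {f : Fin q → Fin m // good m q f ∧ ∀ h : 0 < q, (f ⟨0, h⟩ : ℕ) ≠ c}

lemma phiNat_eq (m q : ℕ) : phiNat m q = Nat.card {f : Fin q → Fin m // good m q f} := rfl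

lemma phiNe1_eq (m q : ℕ) : phiNe1 m q = Ec m 1 q :=
  Nat.card_congr (Equiv.subtypeEquivRight fun f => by unfold good; tauto)

lemma card_zero (m : ℕ) (p : (Fin 0 → Fin m) → Prop) (hp : ∀ f, p f) :
    Nat.card {f : Fin 0 → Fin m // p f} = 1 := by
  haveI : Nonempty {f : Fin 0 → Fin m // p f} := ⟨⟨fun i => i.elim0, hp _⟩⟩
  haveI : Subsingleton {f : Fin 0 → Fin m // p f} :=
    ⟨fun a b => Subtype.ext (funext fun i => i.elim0)⟩
  exact Nat.card_unique

lemma phiNat_zero (m : ℕ) : phiNat m 0 = 1 :=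
  card_zero m _ (fun f => ⟨fun k => k.elim0, fun k hk => absurd hk (by omega)⟩)

lemma Ec_zero (m c : ℕ) : Ec m c 0 = 1 :=
  card_zero m _ (fun f => ⟨⟨fun k => k.elim0, fun k hk => absurd hk (by omega)⟩,
    fun h => absurd h (by omega)⟩)

lemma mk_succ {n k : ℕ} (hk : k + 1 < n + 1) :
    (⟨k + 1, hk⟩ : Fin (n + 1)) = (⟨k, Nat.lt_of_succ_lt_succ hk⟩ : Fin n).succ := rfl

lemma mk_zero' {n : ℕ} (h : 0 < n + 1) : (⟨0, h⟩ : Fin (n + 1)) = 0 := by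
  ext; simp

lemma good_cons {m q : ℕ} (c : Fin m) (g : Fin q → Fin m) :
    good m (q + 1) (Fin.cons c g) ↔
      1 ≤ (c : ℕ) ∧ good m q g ∧ ∀ h : 0 < q, (g ⟨0, h⟩ : ℕ) ≠ (c : ℕ) + 1 := by
  constructor
  · rintro ⟨h1, h2⟩
    refine ⟨?_, ⟨fun k => ?_, fun k hk => ?_⟩, fun h => ?_⟩
    · have := h1 0; rwa [Fin.cons_zero] at this
    · have := h1 k.succ; rwa [Fin.cons_succ] at this
    · have := h2 (k + 1) (by omega)
      rwa [mk_succ, mk_succ, Fin.cons_succ, Fin.cons_succ] at this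
    · have := h2 0 (by omega)
      rwa [mk_succ, Fin.cons_succ, mk_zero', Fin.cons_zero] at this
  · rintro ⟨hc, ⟨g1, g2⟩, hne⟩
    refine ⟨fun k => ?_, fun k hk => ?_⟩
    · cases k using Fin.cases with
      | zero => rwa [Fin.cons_zero]
      | succ i => rw [Fin.cons_succ]; exact g1 i
    · match k with
      | 0 =>
        rw [mk_succ, Fin.cons_succ, mk_zero', Fin.cons_zero]
        exact hne (by omega)
      | k + 1 =>
        rw [mk_succ, Fin.cons_succ, mk_succ, Fin.cons_succ]
        exact g2 k (by omega)

lemma Dc_succ {m c q : ℕ} (hc1 : 1 ≤ c) (hcm : c < m) :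
    Dc m c (q + 1) = Ec m (c + 1) q := by
  apply Nat.card_congr
  refine ⟨fun f => ⟨Fin.tail f.1, ?_⟩, fun g => ⟨Fin.cons ⟨c, hcm⟩ g.1, ?_⟩, ?_, ?_⟩
  · have h0 : (f.1 0 : ℕ) = c := by
      have := f.2.2 (Nat.succ_pos q); rwa [mk_zero'] at this
    have := (good_cons (f.1 0) (Fin.tail f.1)).mp (by rw [Fin.cons_self_tail]; exact f.2.1)
    rw [h0] at this
    exact ⟨this.2.1, this.2.2⟩
  · constructor
    · exact (good_cons _ _).mpr ⟨hc1, g.2.1, g.2.2⟩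
    · intro h; rw [mk_zero', Fin.cons_zero]
  · intro f
    apply Subtype.ext
    have h0 : f.1 0 = ⟨c, hcm⟩ := by
      apply Fin.ext
      have := f.2.2 (Nat.succ_pos q); rwa [mk_zero'] at this
    simp only
    rw [← h0, Fin.cons_self_tail]
  · intro g
    apply Subtype.ext
    simp only
    rw [Fin.tail_cons]

lemma Ec_top (m q : ℕ) : Ec m m q = phiNat m q := by
  rw [phiNat_eq]
  refine Nat.card_congr (Equiv.subtypeEquivRight fun f => ?_)
  constructor
  · exact fun h => h.1
  · intro h
    exact ⟨h, fun hq => by have := (f ⟨0, hq⟩).isLt; omega⟩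

lemma phiNat_part (m c q : ℕ) (hq : 0 < q) : phiNat m q = Dc m c q + Ec m c q := by
  classical
  rw [phiNat_eq, Dc, Ec]
  simp only [Nat.card_eq_fintype_card, Fintype.card_subtype]
  rw [← Finset.card_filter_add_card_filter_not
      (s := Finset.univ.filter (good m q)) (fun f => (f ⟨0, hq⟩ : ℕ) = c)]
  congr 1
  · rw [Finset.filter_filter]
    congr 1; ext f
    simp only [Finset.mem_filter, Finset.mem_univ, true_and]
    constructor
    · rintro ⟨hg, h0⟩; exact ⟨hg, fun _ => h0⟩
    · rintro ⟨hg, h0⟩; exact ⟨hg, h0 hq⟩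
  · rw [Finset.filter_filter]
    congr 1; ext f
    simp only [Finset.mem_filter, Finset.mem_univ, true_and]
    constructor
    · rintro ⟨hg, h0⟩; exact ⟨hg, fun _ => h0⟩
    · rintro ⟨hg, h0⟩; exact ⟨hg, h0 hq⟩

lemma Ec_one (m q : ℕ) (hm : 2 ≤ m) (hq : 0 < q) :
    Ec m 1 q = ∑ c ∈ Finset.Icc 2 (m - 1), Dc m c q := by
  classical
  rw [Ec, Nat.card_eq_fintype_card, Fintype.card_subtype]
  rw [Finset.card_eq_sum_card_fiberwise
      (f := fun f : Fin q → Fin m => (f ⟨0, hq⟩ : ℕ)) (t := Finset.Icc 2 (m - 1)) ?memb]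
  case memb =>
    intro f hf
    simp only [Finset.mem_coe, Finset.mem_filter, Finset.mem_univ, true_and] at hf
    obtain ⟨hg, hne⟩ := hf
    have h1 := hg.1 ⟨0, hq⟩
    have h2 := (f ⟨0, hq⟩).isLt
    have h3 := hne hq
    simp only [Finset.mem_coe, Finset.mem_Icc]; omega
  apply Finset.sum_congr rfl
  intro c hc
  have hc2 : 2 ≤ c := (Finset.mem_Icc.mp hc).1
  rw [Dc, Nat.card_eq_fintype_card, Fintype.card_subtype]
  rw [Finset.filter_filter]
  congr 1; ext f
  simp only [Finset.mem_filter, Finset.mem_univ, true_and]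
  constructor
  · rintro ⟨⟨hg, _⟩, h0⟩; exact ⟨hg, fun _ => h0⟩
  · rintro ⟨hg, h0⟩
    exact ⟨⟨hg, fun h => by rw [h0 hq]; omega⟩, h0 hq⟩

lemma phi_natCast (m q : ℕ) : phi m (q : ℤ) = phiNat m q := by
  simp [phi]

lemma phi_neg (m : ℕ) {n : ℤ} (h : n < 0) : phi m n = 0 := if_pos h

lemma phi_sub (m q r : ℕ) (h : r ≤ q) :
    phi m ((q : ℤ) - (r : ℤ)) = phiNat m (q - r) := by
  rw [show (q : ℤ) - (r : ℤ) = ((q - r : ℕ) : ℤ) from by omega, phi_natCast]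

lemma claimD (m : ℕ) (hm : 2 ≤ m) :
    ∀ q, 1 ≤ q → ∀ c, 1 ≤ c → c ≤ m - 1 →
      (Dc m c q : ℤ) = ∑ r ∈ Finset.Icc 1 (m - c), (-1 : ℤ) ^ (r - 1) * phi m ((q : ℤ) - (r : ℤ)) := by
  intro q
  induction q with
  | zero => omega
  | succ q ih =>
    intro _ c hc1 hcm
    have hclm : c < m := by omega
    rcases Nat.eq_zero_or_pos q with rfl | hq
    · -- base case: length 1
      rw [Dc_succ hc1 hclm, Ec_zero]
      rw [show Finset.Icc 1 (m - c) = insert 1 (Finset.Icc 2 (m - c)) from by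
        ext x; simp only [Finset.mem_insert, Finset.mem_Icc]; omega]
      rw [Finset.sum_insert (by simp)]
      rw [Finset.sum_eq_zero (fun r hr => by
        have hr2 : 2 ≤ r := (Finset.mem_Icc.mp hr).1
        have hneg : ((0 + 1 : ℕ) : ℤ) - (r : ℤ) < 0 := by
          have : (2 : ℤ) ≤ (r : ℤ) := by exact_mod_cast hr2
          omega
        rw [phi_neg m hneg, mul_zero])]
      rw [phi_sub m (0 + 1) 1 (by omega)]
      norm_num [phiNat_zero]
    · rcases eq_or_lt_of_le hcm with hceq | hclt
      · -- c = m - 1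
        have hcm1 : c + 1 = m := by omega
        rw [Dc_succ hc1 hclm, hcm1, Ec_top]
        rw [show m - c = 1 from by omega, Finset.Icc_self, Finset.sum_singleton]
        rw [phi_sub m (q + 1) 1 (by omega), Nat.add_sub_cancel]
        norm_num
      · -- c < m - 1
        have part := phiNat_part m (c + 1) q hq
        have h1 : (Dc m c (q + 1) : ℤ) = (phiNat m q : ℤ) - (Dc m (c + 1) q : ℤ) := by
          rw [Dc_succ hc1 hclm]
          have := congrArg (Nat.cast : ℕ → ℤ) part
          push_cast at this ⊢
          linarith
        rw [h1, ih hq (c + 1) (by omega) (by omega)]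
        rw [show Finset.Icc 1 (m - c) = insert 1 (Finset.Icc 2 (m - c)) from by
          ext x; simp only [Finset.mem_insert, Finset.mem_Icc]; omega]
        rw [Finset.sum_insert (by simp)]
        rw [show Finset.Icc 2 (m - c) = Finset.map (addRightEmbedding 1) (Finset.Icc 1 (m - c - 1)) from by
          rw [Finset.map_add_right_Icc]; congr 1; omega]
        rw [Finset.sum_map]
        rw [phi_sub m (q + 1) 1 (by omega), Nat.add_sub_cancel]
        rw [show m - (c + 1) = m - c - 1 from by omega]
        have hsum : ∑ x ∈ Finset.Icc 1 (m - c - 1),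
            (-1 : ℤ) ^ ((addRightEmbedding 1) x - 1) * phi m (((q + 1 : ℕ) : ℤ) - (((addRightEmbedding 1) x : ℕ) : ℤ))
            = ∑ x ∈ Finset.Icc 1 (m - c - 1), -((-1 : ℤ) ^ (x - 1) * phi m ((q : ℤ) - (x : ℤ))) := by
          refine Finset.sum_congr rfl (fun r hr => ?_)
          have hr1 : 1 ≤ r := (Finset.mem_Icc.mp hr).1
          simp only [addRightEmbedding_apply]
          have hpow : (-1 : ℤ) ^ (r + 1 - 1) = -(-1 : ℤ) ^ (r - 1) := by
            rw [show r + 1 - 1 = (r - 1) + 1 from by omega, pow_succ]; ring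
          have harg : ((q + 1 : ℕ) : ℤ) - ((r + 1 : ℕ) : ℤ) = (q : ℤ) - (r : ℤ) := by
            push_cast; ring
          rw [hpow, harg]; ring
        rw [hsum, Finset.sum_neg_distrib]
        push_cast
        ring

end Stmt7


/-- **Lemma (Itagaki–Nakamoto–Torii).**
For every `q > 0`, `φ(q; i₁ ≠ 1) = ∑_{r=1}^{m-2} (-1)^{r-1} (m-1-r) φ(q - r)`. -/
theorem stmt_7 (m : ℕ) (hm : 2 ≤ m) (q : ℕ) (hq : 0 < q) :
    (phiNe1 m q : ℤ) = ∑ r ∈ Finset.Icc 1 (m - 2),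
      (-1 : ℤ) ^ (r - 1) * ((m : ℤ) - 1 - (r : ℤ)) * phi m ((q : ℤ) - (r : ℤ)) := by
  classical
  rw [Stmt7.phiNe1_eq, Stmt7.Ec_one m q hm hq]
  push_cast
  have step1 : ∑ c ∈ Finset.Icc 2 (m - 1), ((Stmt7.Dc m c q : ℤ)) =
      ∑ c ∈ Finset.Icc 2 (m - 1), ∑ r ∈ Finset.Icc 1 (m - 2),
        (if r ≤ m - c then (-1 : ℤ) ^ (r - 1) * phi m ((q : ℤ) - (r : ℤ)) else 0) := by
    refine Finset.sum_congr rfl (fun c hc => ?_)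
    obtain ⟨hc2, hcm⟩ := Finset.mem_Icc.mp hc
    rw [Stmt7.claimD m hm q hq c (by omega) hcm]
    rw [show Finset.Icc 1 (m - c) = (Finset.Icc 1 (m - 2)).filter (fun r => r ≤ m - c) from by
      ext x; simp only [Finset.mem_filter, Finset.mem_Icc]; omega]
    rw [Finset.sum_filter]
  rw [step1, Finset.sum_comm]
  refine Finset.sum_congr rfl (fun r hr => ?_)
  obtain ⟨hr1, hr2⟩ := Finset.mem_Icc.mp hr
  rw [← Finset.sum_filter]
  rw [show (Finset.Icc 2 (m - 1)).filter (fun c => r ≤ m - c) = Finset.Icc 2 (m - r) from by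
    ext x; simp only [Finset.mem_filter, Finset.mem_Icc]; omega]
  rw [Finset.sum_const, Nat.card_Icc, nsmul_eq_mul]
  rw [show ((m - r + 1 - 2 : ℕ) : ℤ) = (m : ℤ) - 1 - (r : ℤ) from by omega]
  ring
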